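/- Let ψ be the negentropy ψ(p) = Σ_i p_i log p_i, let p_t ∈ Δ([K]) with positive entries, and let ℓ_t ∈ ℝ^K have ℓ_{t,i} > 0 for all i. Then for any η > 0: max over p ∈ ℝ_{≥0}^K of (⟨p_t - p, ℓ_t⟩ - (1/η)·D_ψ(p, p_t)) ≤ (η/2)·Σ_i p_{t,i}·ℓ_{t,i}². -/

import Mathlib

open Finset Real

lemma exp_neg_le_quadratic {x : ℝ} (hx : 0 ≤ x) :
    Real.exp (-x) ≤ 1 - x + x ^ 2 / 2 := by
  have h1 := Real.quadratic_le_exp_of_nonneg hx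
  have h2 : Real.exp (-x) * Real.exp x = 1 := by
    rw [← Real.exp_add]; simp
  have h3 := Real.exp_pos (-x)
  nlinarith [sq_nonneg x, sq_nonneg (x^2)]

lemma pointwise_aux (p q x : ℝ) (hp : 0 < p) (hq : 0 ≤ q) (hx : 0 < x) :
    (p - q) * x - (q * Real.log (q / p) - q + p) ≤ p * x ^ 2 / 2 := by
  have hgibbs : q - p * Real.exp (-x) ≤ q * Real.log (q / p) + q * x := by
    rcases eq_or_lt_of_le hq with h0 | h0
    · simp [← h0]
      positivity
    · have hpe : 0 < p * Real.exp (-x) := by positivity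
      have hlog := Real.log_le_sub_one_of_pos (show 0 < p * Real.exp (-x) / q by positivity)
      have hlogeq : Real.log (p * Real.exp (-x) / q) = Real.log p + (-x) - Real.log q := by
        rw [Real.log_div (by positivity) h0.ne', Real.log_mul hp.ne' (Real.exp_pos _).ne',
          Real.log_exp]
      have hlq : q * Real.log (q / p) = q * Real.log q - q * Real.log p := by
        rw [Real.log_div h0.ne' hp.ne']; ring
      have := mul_le_mul_of_nonneg_left hlog hq
      rw [hlogeq] at this
      have hd : q * (p * Real.exp (-x) / q) = p * Real.exp (-x) := by
        field_simp
      nlinarith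
  have hexp : Real.exp (-x) ≤ 1 - x + x ^ 2 / 2 := exp_neg_le_quadratic hx.le
  nlinarith

/-- Stability under negentropy, nonnegative losses. -/
theorem negentropy_stability_pos (K : ℕ) (η : ℝ) (hη : 0 < η)
    (p ℓ : Fin K → ℝ) (hp : ∀ i, 0 < p i) (hps : ∑ i, p i = 1)
    (hℓ : ∀ i, 0 < ℓ i)
    (q : Fin K → ℝ) (hq : ∀ i, 0 ≤ q i) :
    (∑ i, (p i - q i) * ℓ i)
      - (1/η) * (∑ i, (q i * Real.log (q i / p i) - q i + p i))
    ≤ (η/2) * ∑ i, p i * (ℓ i)^2 := by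
  have key : ∀ i, (p i - q i) * ℓ i - (1/η) * (q i * Real.log (q i / p i) - q i + p i)
      ≤ (η/2) * (p i * (ℓ i)^2) := by
    intro i
    have h := pointwise_aux (p i) (q i) (η * ℓ i) (hp i) (hq i) (mul_pos hη (hℓ i))
    rw [← mul_le_mul_iff_right₀ hη]
    have h2 : η * ((p i - q i) * ℓ i - 1/η * (q i * Real.log (q i / p i) - q i + p i))
        = (p i - q i) * (η * ℓ i) - (q i * Real.log (q i / p i) - q i + p i) := by
      field_simp
    rw [h2]
    nlinarith [h]
  calc (∑ i, (p i - q i) * ℓ i)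
      - (1/η) * (∑ i, (q i * Real.log (q i / p i) - q i + p i))
      = ∑ i, ((p i - q i) * ℓ i - (1/η) * (q i * Real.log (q i / p i) - q i + p i)) := by
        rw [Finset.mul_sum, ← Finset.sum_sub_distrib]
    _ ≤ ∑ i, (η/2) * (p i * (ℓ i)^2) := Finset.sum_le_sum (fun i _ => key i)
    _ = (η/2) * ∑ i, p i * (ℓ i)^2 := by rw [Finset.mul_sum]
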